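/- Let u₀ ∈ L^∞(ℝ) be measurable, α > 0, h_α(x) = (1+x²)^{−α}, and let G be the heat kernel. Let T* = min{1, ((‖u₀‖_∞+1)²(‖h_α'‖_∞/2 + 1/√π))^{−2}, (4(‖u₀‖_∞+1)(‖h_α'‖_∞/2 + 1/√π))^{−2}}. Then for any bounded continuous v on ℝ × (0,T*] with ‖v‖_∞ ≤ ‖u₀‖_∞ + 1, and any (x,t) with 0 < t ≤ T*, the quantity |∫₀^t ∫_ℝ (v(s,τ)²/2)(G(x,t;s,τ)h_α'(s) + ∂G/∂s(x,t;s,τ)h_α(s)) ds dτ| is at most 1. -/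

import Mathlib

open MeasureTheory Real Set Filter

noncomputable def G (x t s τ : ℝ) : ℝ :=
  (1 / Real.sqrt (4 * Real.pi * (t - τ))) * Real.exp (-(x - s)^2 / (4 * (t - τ)))

noncomputable def hfun (α : ℝ) (x : ℝ) : ℝ := (1 + x^2) ^ (-α)

lemma hfun_hasDerivAt (α x : ℝ) :
    HasDerivAt (hfun α) ((-α) * (1 + x^2) ^ (-α - 1) * (2 * x)) x := by
  have h1 : HasDerivAt (fun y : ℝ => 1 + y ^ 2) (2 * x) x := by
    simpa using (hasDerivAt_pow 2 x).const_add 1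
  have h2 : HasDerivAt (fun y : ℝ => y ^ (-α)) ((-α) * (1 + x^2) ^ (-α - 1)) (1 + x^2) :=
    Real.hasDerivAt_rpow_const (Or.inl (by positivity))
  exact h2.comp x h1

lemma G_hasDerivAt (x t τ s : ℝ) (h : 0 < t - τ) :
    HasDerivAt (fun s' => G x t s' τ) (G x t s τ * ((x - s) / (2 * (t - τ)))) s := by
  have h1 : HasDerivAt (fun s' : ℝ => -(x - s') ^ 2 / (4 * (t - τ))) ((x - s) / (2 * (t - τ))) s := by
    have h0 : HasDerivAt (fun s' : ℝ => x - s') (-1) s := (hasDerivAt_id s).const_sub x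
    have := ((h0.pow 2).neg).div_const (4 * (t - τ))
    refine this.congr_deriv ?_
    push_cast
    field_simp
    ring
  have := (h1.exp).const_mul (1 / Real.sqrt (4 * Real.pi * (t - τ)))
  unfold G
  refine this.congr_deriv ?_
  ring

lemma integral_Ioi_mul_exp {b : ℝ} (hb : 0 < b) :
    ∫ r in Ioi (0:ℝ), r * Real.exp (-b * r ^ 2) = (2 * b)⁻¹ := by
  have A : ∀ x : ℝ, HasDerivAt (fun y : ℝ => -(2 * b)⁻¹ * Real.exp (-b * y ^ 2))
      (x * Real.exp (-b * x ^ 2)) x := by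
    intro y
    refine (((hasDerivAt_pow 2 y).const_mul (-b)).exp.const_mul (-(2 * b)⁻¹)).congr_deriv ?_
    push_cast
    field_simp
  have B : Tendsto (fun y : ℝ => -(2 * b)⁻¹ * Real.exp (-b * y ^ 2)) atTop
      (nhds (-(2 * b)⁻¹ * 0)) := by
    refine Tendsto.const_mul _ ?_
    refine Real.tendsto_exp_atBot.comp ?_
    exact (tendsto_pow_atTop two_ne_zero).const_mul_atTop_of_neg (neg_lt_zero.2 hb)
  have := integral_Ioi_of_hasDerivAt_of_tendsto' (a := 0) (fun y _ => A y)
    ((integrable_mul_exp_neg_mul_sq hb).integrableOn) B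
  simpa using this

lemma gauss_integrable {a : ℝ} (ha : 0 < a) (x : ℝ) :
    Integrable (fun s : ℝ => Real.exp (-(x - s) ^ 2 / (4 * a))) := by
  have hb : 0 < (4 * a)⁻¹ := by positivity
  have h := (integrable_exp_neg_mul_sq hb).comp_sub_left x
  refine h.congr ?_
  filter_upwards with s
  congr 1
  field_simp

lemma gauss_integral {a : ℝ} (ha : 0 < a) (x : ℝ) :
    ∫ s : ℝ, Real.exp (-(x - s) ^ 2 / (4 * a)) = Real.sqrt (4 * Real.pi * a) := by
  have hb : 0 < (4 * a)⁻¹ := by positivity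
  have h1 : (fun s : ℝ => Real.exp (-(x - s) ^ 2 / (4 * a)))
      = fun s : ℝ => (fun y : ℝ => Real.exp (-(4 * a)⁻¹ * y ^ 2)) (x - s) := by
    funext s; congr 1; field_simp
  rw [h1]
  rw [show (∫ s : ℝ, (fun y : ℝ => Real.exp (-(4 * a)⁻¹ * y ^ 2)) (x - s))
      = ∫ y : ℝ, Real.exp (-(4 * a)⁻¹ * y ^ 2) from
    MeasureTheory.integral_sub_left_eq_self (fun y : ℝ => Real.exp (-(4 * a)⁻¹ * y ^ 2)) volume x, integral_gaussian]
  congr 1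
  field_simp

lemma gauss_abs_integrable {a : ℝ} (ha : 0 < a) (x : ℝ) :
    Integrable (fun s : ℝ => |x - s| * Real.exp (-(x - s) ^ 2 / (4 * a))) := by
  have hb : 0 < (4 * a)⁻¹ := by positivity
  have h := ((integrable_mul_exp_neg_mul_sq hb).abs).comp_sub_left x
  refine h.congr ?_
  filter_upwards with s
  rw [abs_mul, abs_of_pos (Real.exp_pos _)]
  congr 2
  field_simp

lemma gauss_abs_integral {a : ℝ} (ha : 0 < a) (x : ℝ) :
    ∫ s : ℝ, |x - s| * Real.exp (-(x - s) ^ 2 / (4 * a)) = 4 * a := by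
  have hb : 0 < (4 * a)⁻¹ := by positivity
  have h1 : (fun s : ℝ => |x - s| * Real.exp (-(x - s) ^ 2 / (4 * a)))
      = fun s : ℝ => (fun y : ℝ => |y| * Real.exp (-(4 * a)⁻¹ * y ^ 2)) (x - s) := by
    funext s; congr 2; field_simp
  rw [h1]
  rw [show (∫ s : ℝ, (fun y : ℝ => |y| * Real.exp (-(4 * a)⁻¹ * y ^ 2)) (x - s))
      = ∫ y : ℝ, |y| * Real.exp (-(4 * a)⁻¹ * y ^ 2) from
    MeasureTheory.integral_sub_left_eq_self (fun y : ℝ => |y| * Real.exp (-(4 * a)⁻¹ * y ^ 2)) volume x]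
  have h2 : (fun y : ℝ => |y| * Real.exp (-(4 * a)⁻¹ * y ^ 2))
      = fun y : ℝ => (fun r : ℝ => r * Real.exp (-(4 * a)⁻¹ * r ^ 2)) |y| := by
    funext y; simp [sq_abs]
  rw [h2]
  rw [show (∫ y : ℝ, (fun r : ℝ => r * Real.exp (-(4 * a)⁻¹ * r ^ 2)) |y|)
      = 2 * ∫ r in Ioi (0:ℝ), r * Real.exp (-(4 * a)⁻¹ * r ^ 2) from
    integral_comp_abs (f := fun r : ℝ => r * Real.exp (-(4 * a)⁻¹ * r ^ 2)), integral_Ioi_mul_exp hb]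
  field_simp

lemma hfun_deriv_eq (α : ℝ) (hα : 0 < α) :
    deriv (hfun α) = fun s : ℝ => (-α) * (1 + s^2) ^ (-α - 1) * (2 * s) :=
  funext fun s => (hfun_hasDerivAt α s).deriv

lemma hfun_continuous (α : ℝ) : Continuous (hfun α) := by
  unfold hfun
  exact (continuous_const.add (continuous_pow 2)).rpow_const
    (fun y => Or.inl (by positivity : (1:ℝ) + y ^ 2 ≠ 0))

lemma hfun_deriv_continuous (α : ℝ) (hα : 0 < α) : Continuous (deriv (hfun α)) := by
  rw [hfun_deriv_eq α hα]
  exact (continuous_const.mul ((continuous_const.add (continuous_pow 2)).rpow_const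
    (fun y => Or.inl (by positivity : (1:ℝ) + y ^ 2 ≠ 0)))).mul (continuous_const.mul continuous_id)

lemma hfun_le_one (α : ℝ) (hα : 0 < α) (s : ℝ) : |hfun α s| ≤ 1 := by
  unfold hfun
  rw [abs_of_nonneg (Real.rpow_nonneg (by positivity) _)]
  exact Real.rpow_le_one_of_one_le_of_nonpos (by nlinarith [sq_nonneg s]) (by linarith)

lemma inner_bound (α N H x t τ : ℝ) (hα : 0 < α)
    (hH : IsLUB (Set.range fun y => |deriv (hfun α) y|) H)
    (v : ℝ → ℝ → ℝ) (hvbdd : ∀ s τ' : ℝ, |v s τ'| ≤ N + 1)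
    (hvc : Continuous fun s => v s τ)
    (hτ : 0 < t - τ) :
    |∫ s : ℝ, (v s τ)^2 / 2 * (G x t s τ * deriv (hfun α) s +
        deriv (fun s' => G x t s' τ) s * hfun α s)|
      ≤ (N+1)^2/2 * H + (N+1)^2/2 * (Real.sqrt Real.pi)⁻¹ * (t - τ) ^ (-(1:ℝ)/2) := by
  set a := t - τ with ha_def
  set c := 1 / Real.sqrt (4 * Real.pi * a) with hc_def
  have hc0 : 0 < Real.sqrt (4 * Real.pi * a) := Real.sqrt_pos.mpr (by positivity)
  have hc : 0 ≤ c := by positivity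
  have hH0 : 0 ≤ H := le_trans (abs_nonneg _) (hH.1 ⟨0, rfl⟩)
  set K := (N+1)^2/2 with hK_def
  have hK : 0 ≤ K := by positivity
  set E := fun s : ℝ => Real.exp (-(x - s)^2 / (4 * a)) with hE_def
  set f := fun s : ℝ => (v s τ)^2 / 2 * (G x t s τ * deriv (hfun α) s +
        deriv (fun s' => G x t s' τ) s * hfun α s) with hf_def
  set g := fun s : ℝ => (K * c * H) * E s + (K * c / (2 * a)) * (|x - s| * E s) with hg_def
  have hGE : ∀ s, G x t s τ = c * E s := fun s => rfl
  have hGpos : ∀ s, 0 ≤ G x t s τ := fun s => by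
    rw [hGE]; positivity
  -- pointwise bound
  have hpt : ∀ s, |f s| ≤ g s := by
    intro s
    have hdG : deriv (fun s' => G x t s' τ) s = G x t s τ * ((x - s) / (2 * a)) :=
      (G_hasDerivAt x t τ s hτ).deriv
    have h1 : |(v s τ)^2 / 2| ≤ K := by
      rw [abs_div, abs_of_nonneg (by norm_num : (0:ℝ) ≤ 2), abs_pow]
      have := pow_le_pow_left₀ (abs_nonneg _) (hvbdd s τ) 2
      rw [hK_def]
      linarith
    have h2 : |G x t s τ * deriv (hfun α) s + deriv (fun s' => G x t s' τ) s * hfun α s|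
        ≤ c * E s * H + c / (2 * a) * (|x - s| * E s) := by
      rw [hdG]
      refine le_trans (abs_add_le _ _) ?_
      have e1 : |G x t s τ * deriv (hfun α) s| ≤ c * E s * H := by
        rw [abs_mul, abs_of_nonneg (hGpos s), hGE]
        exact mul_le_mul_of_nonneg_left (hH.1 ⟨s, rfl⟩) (by positivity)
      have e2 : |G x t s τ * ((x - s) / (2 * a)) * hfun α s|
          ≤ c / (2 * a) * (|x - s| * E s) := by
        rw [abs_mul, abs_mul, abs_of_nonneg (hGpos s), hGE, abs_div,
          abs_of_nonneg (by positivity : (0:ℝ) ≤ 2 * a)]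
        calc c * E s * (|x - s| / (2 * a)) * |hfun α s|
            ≤ c * E s * (|x - s| / (2 * a)) * 1 :=
              mul_le_mul_of_nonneg_left (hfun_le_one α hα s) (by positivity)
          _ = c / (2 * a) * (|x - s| * E s) := by ring
      linarith
    calc |f s| = |(v s τ)^2 / 2| * |G x t s τ * deriv (hfun α) s +
          deriv (fun s' => G x t s' τ) s * hfun α s| := abs_mul _ _
      _ ≤ K * (c * E s * H + c / (2 * a) * (|x - s| * E s)) :=
          mul_le_mul h1 h2 (abs_nonneg _) hK
      _ = g s := by rw [hg_def]; ring
  -- integrability of g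
  have hgi1 : Integrable (fun s => (K * c * H) * E s) :=
    (gauss_integrable hτ x).const_mul _
  have hgi2 : Integrable (fun s => (K * c / (2 * a)) * (|x - s| * E s)) :=
    (gauss_abs_integrable hτ x).const_mul _
  have hg_int : Integrable g := hgi1.add hgi2
  -- measurability of f
  have hf_cont : Continuous f := by
    have hG' : (fun s => deriv (fun s' => G x t s' τ) s)
        = fun s => G x t s τ * ((x - s) / (2 * a)) :=
      funext fun s => (G_hasDerivAt x t τ s hτ).deriv
    have hGc : Continuous fun s => G x t s τ := by
      unfold G
      exact continuous_const.mul (Real.continuous_exp.comp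
        ((((continuous_const.sub continuous_id).pow 2).neg).div_const _))
    rw [hf_def]
    simp only [hG']
    exact ((hvc.pow 2).div_const 2).mul
      ((hGc.mul (hfun_deriv_continuous α hα)).add
        ((hGc.mul (((continuous_const.sub continuous_id).div_const _))).mul (hfun_continuous α)))
  have hf_int : Integrable f :=
    hg_int.mono' hf_cont.aestronglyMeasurable
      (ae_of_all _ fun s => by simpa [Real.norm_eq_abs] using hpt s)
  -- conclude
  have hb : |∫ s, f s| ≤ ∫ s, g s := by
    calc |∫ s, f s| = ‖∫ s, f s‖ := (Real.norm_eq_abs _).symm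
      _ ≤ ∫ s, ‖f s‖ := norm_integral_le_integral_norm f
      _ = ∫ s, |f s| := by simp [Real.norm_eq_abs]
      _ ≤ ∫ s, g s := integral_mono hf_int.abs hg_int hpt
  have hgval : ∫ s, g s = K * H + K * (Real.sqrt Real.pi)⁻¹ * a ^ (-(1:ℝ)/2) := by
    rw [hg_def]
    rw [integral_add hgi1 hgi2, integral_const_mul, integral_const_mul,
      gauss_integral hτ x, gauss_abs_integral hτ x]
    have h4 : Real.sqrt (4 * Real.pi * a) = 2 * Real.sqrt (Real.pi * a) := by
      rw [show (4 : ℝ) * Real.pi * a = 2^2 * (Real.pi * a) by ring,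
        Real.sqrt_mul (by positivity), Real.sqrt_sq (by norm_num)]
    have hsa : Real.sqrt (Real.pi * a) = Real.sqrt Real.pi * a ^ ((1:ℝ)/2) := by
      rw [Real.sqrt_mul Real.pi_pos.le]
      congr 1
      exact Real.sqrt_eq_rpow a
    have harpow : (a ^ ((1:ℝ)/2))⁻¹ = a ^ (-(1:ℝ)/2) := by
      rw [← Real.rpow_neg hτ.le]; norm_num
    rw [hc_def, h4]
    rw [hsa, ← harpow]
    have : 0 < a ^ ((1:ℝ)/2) := by positivity
    field_simp
    ring
  rw [hgval] at hb
  exact hb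

theorem duhamel_nonlinear_term_bound
    (α : ℝ) (hα : 0 < α)
    (u₀ : ℝ → ℝ) (hmeas : Measurable u₀)
    (N : ℝ) (hN : IsLUB (Set.range fun x => |u₀ x|) N)
    (H : ℝ) (hH : IsLUB (Set.range fun x => |deriv (hfun α) x|) H)
    (Tstar : ℝ)
    (hT : Tstar = min 1 (min
      ((((N + 1)^2 * (H / 2 + 1 / Real.sqrt Real.pi))^2)⁻¹)
      (((4 * (N + 1) * (H / 2 + 1 / Real.sqrt Real.pi))^2)⁻¹)))
    (v : ℝ → ℝ → ℝ)
    (hvcont : ContinuousOn (fun p : ℝ × ℝ => v p.1 p.2) {p : ℝ × ℝ | 0 < p.2 ∧ p.2 ≤ Tstar})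
    (hvbdd : ∀ s τ : ℝ, |v s τ| ≤ N + 1)
    (x t : ℝ) (ht : 0 < t) (htT : t ≤ Tstar) :
    |∫ τ in Set.Ioo 0 t, ∫ s : ℝ,
        (v s τ)^2 / 2 * (G x t s τ * deriv (hfun α) s +
          deriv (fun s' => G x t s' τ) s * hfun α s)| ≤ 1 := by
  have hN0 : 0 ≤ N := le_trans (abs_nonneg _) (hN.1 ⟨0, rfl⟩)
  have hH0 : 0 ≤ H := le_trans (abs_nonneg _) (hH.1 ⟨0, rfl⟩)
  have hsqrtpi : 0 < Real.sqrt Real.pi := Real.sqrt_pos.mpr Real.pi_pos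
  set D := (N + 1)^2 * (H / 2 + 1 / Real.sqrt Real.pi) with hD_def
  have hD : 0 < D :=
    mul_pos (by positivity) (add_pos_of_nonneg_of_pos (by linarith) (by positivity))
  have ht1 : t ≤ 1 := le_trans htT (by rw [hT]; exact min_le_left _ _)
  have htD2 : t ≤ ((D^2)⁻¹ : ℝ) := le_trans htT (by
    rw [hT]; exact le_trans (min_le_right _ _) (min_le_left _ _))
  have htD : Real.sqrt t ≤ D⁻¹ := by
    calc Real.sqrt t ≤ Real.sqrt ((D^2)⁻¹) := Real.sqrt_le_sqrt htD2
      _ = D⁻¹ := by rw [Real.sqrt_inv, Real.sqrt_sq hD.le]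
  set K := (N + 1)^2 / 2 with hK_def
  have hK : 0 ≤ K := by positivity
  set I := fun τ : ℝ => ∫ s : ℝ, (v s τ)^2 / 2 * (G x t s τ * deriv (hfun α) s +
      deriv (fun s' => G x t s' τ) s * hfun α s) with hI_def
  set Mb := fun τ : ℝ => K * H + K * (Real.sqrt Real.pi)⁻¹ * (t - τ) ^ (-(1:ℝ)/2) with hMb_def
  -- continuity of v in s for fixed τ
  have hvc : ∀ τ ∈ Set.Ioo (0:ℝ) t, Continuous fun s => v s τ := by
    intro τ hτ
    have hmap : ∀ s : ℝ, ((s, τ) : ℝ × ℝ) ∈ {p : ℝ × ℝ | 0 < p.2 ∧ p.2 ≤ Tstar} :=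
      fun s => ⟨hτ.1, le_trans hτ.2.le htT⟩
    have := hvcont.comp
      (Continuous.continuousOn (s := Set.univ) (continuous_id.prodMk continuous_const))
      (fun s _ => hmap s)
    exact continuousOn_univ.mp this
  have hIbound : ∀ τ ∈ Set.Ioo (0:ℝ) t, |I τ| ≤ Mb τ := fun τ hτ =>
    inner_bound α N H x t τ hα hH v hvbdd (hvc τ hτ) (sub_pos.mpr hτ.2)
  -- integrability of Mb on Ioo 0 t
  have h_rpow_ii : IntervalIntegrable (fun τ : ℝ => (t - τ) ^ (-(1:ℝ)/2)) volume 0 t := by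
    have h1 := (intervalIntegral.intervalIntegrable_rpow' (a := 0) (b := t)
      (by norm_num : (-1:ℝ) < -(1:ℝ)/2)).comp_sub_left t
    simpa using h1.symm
  have h_rpow_int : IntegrableOn (fun τ : ℝ => (t - τ) ^ (-(1:ℝ)/2)) (Set.Ioo 0 t) :=
    ((intervalIntegrable_iff_integrableOn_Ioc_of_le ht.le).mp h_rpow_ii).mono_set
      Set.Ioo_subset_Ioc_self
  have hMb_int : IntegrableOn Mb (Set.Ioo 0 t) := by
    rw [hMb_def]
    exact (integrableOn_const measure_Ioo_lt_top.ne).add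
      (h_rpow_int.const_mul _)
  -- value of ∫ Mb
  have h_rpow_val : ∫ τ in Set.Ioo (0:ℝ) t, (t - τ) ^ (-(1:ℝ)/2) = 2 * Real.sqrt t := by
    rw [← integral_Ioc_eq_integral_Ioo, ← intervalIntegral.integral_of_le ht.le]
    rw [intervalIntegral.integral_comp_sub_left (fun u : ℝ => u ^ (-(1:ℝ)/2)) t]
    simp only [sub_self, sub_zero]
    rw [integral_rpow (Or.inl (by norm_num : (-1:ℝ) < -(1:ℝ)/2))]
    rw [Real.zero_rpow (by norm_num : -(1:ℝ)/2 + 1 ≠ 0)]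
    rw [show -(1:ℝ)/2 + 1 = 1/2 by norm_num, ← Real.sqrt_eq_rpow]
    ring
  have hMb_val : ∫ τ in Set.Ioo (0:ℝ) t, Mb τ
      = K * H * t + K * (Real.sqrt Real.pi)⁻¹ * (2 * Real.sqrt t) := by
    rw [hMb_def]
    rw [integral_add (integrableOn_const (C := K * H) measure_Ioo_lt_top.ne)
      (h_rpow_int.const_mul _)]
    have e1 : ∫ _ in Set.Ioo (0:ℝ) t, K * H = K * H * t := by
      rw [setIntegral_const, measureReal_def, Real.volume_Ioo, sub_zero, ENNReal.toReal_ofReal ht.le,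
        smul_eq_mul]
      ring
    have e2 : ∫ τ in Set.Ioo (0:ℝ) t, K * (Real.sqrt Real.pi)⁻¹ * (t - τ) ^ (-(1:ℝ)/2)
        = K * (Real.sqrt Real.pi)⁻¹ * (2 * Real.sqrt t) := by
      rw [integral_const_mul, h_rpow_val]
    rw [e1, e2]
  -- measurability of I on Ioo 0 t
  set S : Set (ℝ × ℝ) := Set.Ioo (0:ℝ) t ×ˢ (Set.univ : Set ℝ) with hS_def
  have hSopen : IsOpen S := isOpen_Ioo.prod isOpen_univ
  set F : ℝ × ℝ → ℝ := fun p => (v p.2 p.1)^2 / 2 * (G x t p.2 p.1 * deriv (hfun α) p.2 +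
      G x t p.2 p.1 * ((x - p.2) / (2 * (t - p.1))) * hfun α p.2) with hF_def
  have htp : ∀ p : ℝ × ℝ, p ∈ S → 0 < t - p.1 := by
    rintro ⟨τ, s⟩ ⟨hτ, -⟩
    exact sub_pos.mpr hτ.2
  have hFcont : ContinuousOn F S := by
    have hvS : ContinuousOn (fun p : ℝ × ℝ => v p.2 p.1) S := by
      refine hvcont.comp continuous_swap.continuousOn ?_
      rintro ⟨τ, s⟩ ⟨hτ, -⟩
      exact ⟨hτ.1, le_trans hτ.2.le htT⟩
    have hGS : ContinuousOn (fun p : ℝ × ℝ => G x t p.2 p.1) S := by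
      unfold G
      apply ContinuousOn.mul
      · apply ContinuousOn.div continuousOn_const
        · exact (Real.continuous_sqrt.comp
            (continuous_const.mul (continuous_const.sub continuous_fst))).continuousOn
        · intro p hp
          have := htp p hp
          refine ne_of_gt (Real.sqrt_pos.mpr (by positivity))
      · refine Real.continuous_exp.comp_continuousOn ?_
        refine ContinuousOn.div
          (((continuous_const.sub continuous_snd).pow 2).neg.continuousOn)
          ((continuous_const.mul (continuous_const.sub continuous_fst)).continuousOn)
          (fun p hp => ?_)
        have := htp p hp
        positivity
    have hdivS : ContinuousOn (fun p : ℝ × ℝ => (x - p.2) / (2 * (t - p.1))) S := by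
      refine ContinuousOn.div ((continuous_const.sub continuous_snd).continuousOn)
        ((continuous_const.mul (continuous_const.sub continuous_fst)).continuousOn)
        (fun p hp => ?_)
      have := htp p hp
      positivity
    rw [hF_def]
    exact ((hvS.pow 2).div_const 2).mul
      ((hGS.mul (((hfun_deriv_continuous α hα).comp continuous_snd).continuousOn)).add
        ((hGS.mul hdivS).mul (((hfun_continuous α).comp continuous_snd).continuousOn)))
  have hmeasμ : (volume.restrict (Set.Ioo (0:ℝ) t)).prod (volume : Measure ℝ)
      = ((volume : Measure ℝ).prod volume).restrict S := by
    rw [hS_def, ← Measure.prod_restrict, Measure.restrict_univ]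
  have hFasm : AEStronglyMeasurable F ((volume.restrict (Set.Ioo (0:ℝ) t)).prod volume) := by
    rw [hmeasμ]
    exact hFcont.aestronglyMeasurable hSopen.measurableSet
  have hIasm : AEStronglyMeasurable I (volume.restrict (Set.Ioo (0:ℝ) t)) := by
    have h1 := hFasm.integral_prod_right'
    refine h1.congr ?_
    refine (ae_restrict_iff' measurableSet_Ioo).mpr (ae_of_all _ fun τ hτ => ?_)
    show (∫ s : ℝ, F (τ, s)) = ∫ s : ℝ, (v s τ)^2 / 2 * (G x t s τ * deriv (hfun α) s +
      deriv (fun s' => G x t s' τ) s * hfun α s)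
    congr 1
    funext s
    rw [hF_def]
    simp only
    rw [(G_hasDerivAt x t τ s (sub_pos.mpr hτ.2)).deriv]
  have hI_int : IntegrableOn I (Set.Ioo 0 t) :=
    hMb_int.mono' hIasm ((ae_restrict_iff' measurableSet_Ioo).mpr
      (ae_of_all _ fun τ hτ => by simpa [Real.norm_eq_abs] using hIbound τ hτ))
  have hfinal : |∫ τ in Set.Ioo 0 t, I τ| ≤ ∫ τ in Set.Ioo 0 t, Mb τ := by
    calc |∫ τ in Set.Ioo 0 t, I τ| = ‖∫ τ in Set.Ioo 0 t, I τ‖ := (Real.norm_eq_abs _).symm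
      _ ≤ ∫ τ in Set.Ioo 0 t, ‖I τ‖ := norm_integral_le_integral_norm I
      _ = ∫ τ in Set.Ioo 0 t, |I τ| := by simp [Real.norm_eq_abs]
      _ ≤ ∫ τ in Set.Ioo 0 t, Mb τ := integral_mono_ae hI_int.abs hMb_int
          ((ae_restrict_iff' measurableSet_Ioo).mpr (ae_of_all _ hIbound))
  rw [hMb_val] at hfinal
  have hst : Real.sqrt t ≤ 1 := by
    rw [show (1:ℝ) = Real.sqrt 1 by simp]
    exact Real.sqrt_le_sqrt ht1
  have hts : t ≤ Real.sqrt t := by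
    nlinarith [Real.sq_sqrt ht.le, Real.sqrt_nonneg t]
  have harith : K * H * t + K * (Real.sqrt Real.pi)⁻¹ * (2 * Real.sqrt t)
      ≤ Real.sqrt t * D := by
    have h1 : K * H * t ≤ K * H * Real.sqrt t :=
      mul_le_mul_of_nonneg_left hts (mul_nonneg hK hH0)
    have h2 : Real.sqrt t * D
        = K * H * Real.sqrt t + K * (Real.sqrt Real.pi)⁻¹ * (2 * Real.sqrt t) := by
      rw [hD_def, hK_def, one_div]
      ring
    linarith
  have hend : Real.sqrt t * D ≤ 1 := by
    calc Real.sqrt t * D ≤ D⁻¹ * D := mul_le_mul_of_nonneg_right htD hD.le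
      _ = 1 := inv_mul_cancel₀ (ne_of_gt hD)
  exact le_trans hfinal (le_trans harith hend)
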